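/- Let $R = k[x_1,\ldots,x_n]$ over a field $k$ and let $Q = (x_{i_1}^{a_1}, \ldots, x_{i_r}^{a_r})$ be an irreducible monomial ideal (all $a_j \ge 1$, distinct indices $i_j$). Set $a_s = \max_j a_j$. Then for each $m \in \mathbb{N}$, $\omega(Q^m) = (m-1)a_s + \omega(Q)$, where $\omega(Q) = a_1 + \cdots + a_r - r + 1$. -/

import Mathlib

open Ideal Finset MvPolynomial

/-- `I` is an `N`-absorbing ideal: whenever a product of `N+1` elements lies in `I`,
the product of some `N` of them (omitting one factor) lies in `I`. -/
def IsNAbsorbing {R : Type*} [CommRing R] (I : Ideal R) (N : ℕ) : Prop :=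
  ∀ x : Fin (N + 1) → R, (∏ i, x i) ∈ I →
    ∃ j, (∏ i ∈ Finset.univ.erase j, x i) ∈ I

/-- `ω(I)`: the least `N` such that `I` is `N`-absorbing. -/
noncomputable def omegaAbs {R : Type*} [CommRing R] (I : Ideal R) : ℕ :=
  sInf {N | IsNAbsorbing I N}

namespace OmegaAux

variable {k : Type*} [Field k] {n r : ℕ}

def pp (i : Fin r → Fin n) (μ : Fin n →₀ ℕ) : Fin r → ℕ := fun j => μ (i j)

def Df (a : Fin r → ℕ) (d : Fin r → ℕ) : ℕ := ∑ j, d j / a j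

def cw (a : Fin r → ℕ) (s : Fin r) (m : ℕ) : Fin r → ℕ :=
  fun j => (a j - 1) + (if j = s then (m - 1) * a s else 0)

def Tset (i : Fin r → Fin n) (a : Fin r → ℕ) (m : ℕ) : Set (Fin n →₀ ℕ) :=
  {τ | ∃ c : Fin r → ℕ, (∑ j, c j) = m ∧ τ = ∑ j, Finsupp.single (i j) (c j * a j)}

noncomputable def slice (i : Fin r → Fin n) (d : Fin r → ℕ) (p : MvPolynomial (Fin n) k) :
    MvPolynomial (Fin n) k :=
  ∑ μ ∈ p.support.filter (fun μ => pp i μ = d), monomial μ (coeff μ p)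

def Box (d : Fin r → ℕ) : Finset (Fin r → ℕ) := Fintype.piFinset (fun j => Finset.range (d j + 1))

lemma apply_sum_single_notin (i : Fin r → Fin n) (c : Fin r → ℕ) (l : Fin n)
    (h : ∀ j, i j ≠ l) : (∑ j, Finsupp.single (i j) (c j)) l = 0 := by
  rw [Finsupp.finset_sum_apply]
  refine Finset.sum_eq_zero fun j _ => ?_
  rw [Finsupp.single_apply, if_neg (h j)]

lemma sum_single_add (i : Fin r → Fin n) (c₁ c₂ : Fin r → ℕ) :
    (∑ j, Finsupp.single (i j) (c₁ j + c₂ j)) =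
      (∑ j, Finsupp.single (i j) (c₁ j)) + ∑ j, Finsupp.single (i j) (c₂ j) := by
  rw [← Finset.sum_add_distrib]
  exact Finset.sum_congr rfl fun j _ => Finsupp.single_add _ _ _

lemma sum_single_ite (i : Fin r → Fin n) (j₀ : Fin r) (v : Fin r → ℕ) :
    (∑ j, Finsupp.single (i j) (if j = j₀ then v j else 0)) =
      Finsupp.single (i j₀) (v j₀) := by
  rw [Finset.sum_eq_single j₀]
  · simp
  · intro j _ hj; simp [hj]
  · simp

lemma apply_sum_single (i : Fin r → Fin n) (hi : Function.Injective i) (c : Fin r → ℕ)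
    (j' : Fin r) : (∑ j, Finsupp.single (i j) (c j)) (i j') = c j' := by
  rw [Finsupp.finset_sum_apply, Finset.sum_eq_single j']
  · simp
  · intro j _ hj
    rw [Finsupp.single_apply, if_neg (fun h => hj (hi h))]
  · simp

lemma Qpow_eq (i : Fin r → Fin n) (a : Fin r → ℕ) (m : ℕ) :
    (Ideal.span (Set.range fun j => (X (i j) : MvPolynomial (Fin n) k) ^ a j)) ^ m =
      Ideal.span ((fun τ => monomial τ (1 : k)) '' Tset i a m) := by
  induction m with
  | zero =>
    rw [pow_zero, Ideal.one_eq_top, eq_comm, Ideal.eq_top_iff_one]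
    have h0 : (0 : Fin n →₀ ℕ) ∈ Tset i a 0 := ⟨0, by simp, by simp⟩
    have : monomial (0 : Fin n →₀ ℕ) (1 : k) ∈ ((fun τ => monomial τ (1 : k)) '' Tset i a 0) :=
      ⟨0, h0, rfl⟩
    simpa using Ideal.subset_span this
  | succ m ih =>
    rw [pow_succ, ih, Ideal.span_mul_span']
    apply le_antisymm
    · rw [Ideal.span_le]
      rintro x ⟨u, hu, v, hv, rfl⟩
      obtain ⟨τ, ⟨c, hc, rfl⟩, rfl⟩ := hu
      obtain ⟨j₀, rfl⟩ := hv
      apply Ideal.subset_span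
      refine ⟨(∑ j, Finsupp.single (i j) (c j * a j)) + Finsupp.single (i j₀) (a j₀),
        ⟨fun j => c j + if j = j₀ then 1 else 0, ?_, ?_⟩, ?_⟩
      · rw [Finset.sum_add_distrib, hc]
        simp
      · have h1 : ∀ j : Fin r, (c j + if j = j₀ then 1 else 0) * a j
            = c j * a j + (if j = j₀ then a j else 0) := by
          intro j; split_ifs <;> ring
        show _ = ∑ j, Finsupp.single (i j) ((c j + if j = j₀ then 1 else 0) * a j)
        refine Eq.symm ?_
        calc (∑ j, Finsupp.single (i j) ((c j + if j = j₀ then 1 else 0) * a j))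
            = ∑ j, Finsupp.single (i j) (c j * a j + (if j = j₀ then a j else 0)) :=
              Finset.sum_congr rfl (fun j _ => by rw [h1 j])
          _ = _ := by rw [sum_single_add i _ _, sum_single_ite i j₀]
      · show monomial _ (1 : k) = monomial _ 1 * (X (i j₀) ^ a j₀)
        rw [X_pow_eq_monomial, monomial_mul, one_mul]
    · rw [Ideal.span_le]
      rintro x ⟨τ, ⟨c, hc, rfl⟩, rfl⟩
      have hex : ∃ j₀, c j₀ ≠ 0 := by
        by_contra h
        push_neg at h
        simp [h] at hc
      obtain ⟨j₀, hj₀⟩ := hex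
      have hsplit : ∀ j : Fin r, c j * a j
          = (c j - if j = j₀ then 1 else 0) * a j + (if j = j₀ then a j else 0) := by
        intro j
        split_ifs with h
        · obtain ⟨t, ht⟩ : ∃ t, c j = t + 1 := by
            refine ⟨c j - 1, ?_⟩
            have : c j ≠ 0 := by rw [h]; exact hj₀
            omega
          rw [ht]
          simp [Nat.add_mul]
        · simp
      have hτ : (∑ j, Finsupp.single (i j) (c j * a j)) =
          (∑ j, Finsupp.single (i j) ((c j - if j = j₀ then 1 else 0) * a j))
            + Finsupp.single (i j₀) (a j₀) := by
        calc (∑ j, Finsupp.single (i j) (c j * a j))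
            = ∑ j, Finsupp.single (i j) ((c j - if j = j₀ then 1 else 0) * a j
                + (if j = j₀ then a j else 0)) :=
              Finset.sum_congr rfl (fun j _ => by rw [← hsplit j])
          _ = _ := by rw [sum_single_add i _ _, sum_single_ite i j₀]
      show monomial _ (1 : k) ∈ _
      rw [hτ]
      have hmm : monomial ((∑ j, Finsupp.single (i j) ((c j - if j = j₀ then 1 else 0) * a j))
            + Finsupp.single (i j₀) (a j₀)) (1 : k)
          = monomial (∑ j, Finsupp.single (i j) ((c j - if j = j₀ then 1 else 0) * a j)) 1
            * monomial (Finsupp.single (i j₀) (a j₀)) 1 := by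
        rw [monomial_mul, one_mul]
      rw [hmm]
      apply Ideal.subset_span
      refine Set.mul_mem_mul ⟨_, ⟨fun j => c j - if j = j₀ then 1 else 0, ?_, rfl⟩, rfl⟩
        ⟨j₀, X_pow_eq_monomial⟩
      have h2 : ∀ j, (c j - if j = j₀ then 1 else 0) + (if j = j₀ then 1 else 0) = c j := by
        intro j
        split_ifs with h
        · have : c j ≠ 0 := by rw [h]; exact hj₀
          omega
        · omega
      have h3 : (∑ j, ((c j - if j = j₀ then 1 else 0) + (if j = j₀ then 1 else 0))) = m + 1 := by
        rw [Finset.sum_congr rfl (fun j (_ : j ∈ univ) => by rw [h2 j]), hc]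
      rw [Finset.sum_add_distrib] at h3
      have h4 : (∑ j, if j = j₀ then 1 else 0) = 1 := by simp
      show (∑ j, (c j - if j = j₀ then 1 else 0)) = m
      omega

lemma exists_le_sum : ∀ (m : ℕ) (v : Fin r → ℕ), m ≤ ∑ j, v j →
    ∃ c : Fin r → ℕ, (∀ j, c j ≤ v j) ∧ (∑ j, c j) = m := by
  intro m
  induction m with
  | zero => exact fun v _ => ⟨0, fun j => Nat.zero_le _, by simp⟩
  | succ m ih =>
    intro v hv
    have hex : ∃ j₀, 1 ≤ v j₀ := by
      by_contra h
      push_neg at h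
      have : ∀ j, v j = 0 := fun j => by have := h j; omega
      simp [this] at hv
    obtain ⟨j₀, hj₀⟩ := hex
    have hsum : (∑ j, (v j - if j = j₀ then 1 else 0)) + (∑ j, if j = j₀ then 1 else 0)
        = ∑ j, v j := by
      rw [← Finset.sum_add_distrib]
      refine Finset.sum_congr rfl fun j _ => ?_
      split_ifs with h
      · subst h; omega
      · omega
    have h4 : (∑ j : Fin r, if j = j₀ then 1 else 0) = 1 := by simp
    have hv' : m ≤ ∑ j, (v j - if j = j₀ then 1 else 0) := by omega
    obtain ⟨c, hc1, hc2⟩ := ih (fun j => v j - if j = j₀ then 1 else 0) hv'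
    refine ⟨fun j => c j + if j = j₀ then 1 else 0, fun j => ?_, ?_⟩
    · show c j + (if j = j₀ then 1 else 0) ≤ v j
      have := hc1 j
      split_ifs with h
      · subst h; rw [if_pos rfl] at this; omega
      · rw [if_neg h] at this; omega
    · show (∑ j, (c j + if j = j₀ then 1 else 0)) = m + 1
      rw [Finset.sum_add_distrib, hc2, h4]

lemma mem_pow_iff (i : Fin r → Fin n) (hi : Function.Injective i) (a : Fin r → ℕ)
    (ha : ∀ j, 1 ≤ a j) (m : ℕ) (f : MvPolynomial (Fin n) k) :
    f ∈ (Ideal.span (Set.range fun j => (X (i j) : MvPolynomial (Fin n) k) ^ a j)) ^ m ↔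
      ∀ μ ∈ f.support, m ≤ Df a (pp i μ) := by
  rw [Qpow_eq, mem_ideal_span_monomial_image]
  refine forall₂_congr fun μ _ => ?_
  constructor
  · rintro ⟨τ, ⟨c, hc, rfl⟩, hle⟩
    rw [Finsupp.le_def] at hle
    have h1 : ∀ j, c j ≤ μ (i j) / a j := by
      intro j
      rw [Nat.le_div_iff_mul_le (ha j)]
      have := hle (i j)
      rwa [apply_sum_single i hi (fun j => c j * a j) j] at this
    calc m = ∑ j, c j := hc.symm
      _ ≤ ∑ j, μ (i j) / a j := Finset.sum_le_sum fun j _ => h1 j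
      _ = Df a (pp i μ) := rfl
  · intro hD
    obtain ⟨c, hc1, hc2⟩ := exists_le_sum m (fun j => μ (i j) / a j) hD
    refine ⟨∑ j, Finsupp.single (i j) (c j * a j), ⟨c, hc2, rfl⟩, ?_⟩
    rw [Finsupp.le_def]
    intro l
    by_cases h : ∃ j', i j' = l
    · obtain ⟨j', rfl⟩ := h
      rw [apply_sum_single i hi (fun j => c j * a j) j']
      calc c j' * a j' ≤ (μ (i j') / a j') * a j' :=
            Nat.mul_le_mul_right _ (hc1 j')
        _ ≤ μ (i j') := Nat.div_mul_le_self _ _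
    · push_neg at h
      rw [Finsupp.finset_sum_apply]
      have : ∀ j ∈ univ, (Finsupp.single (i j) (c j * a j)) l = 0 := by
        intro j _
        rw [Finsupp.single_apply, if_neg (h j)]
      rw [Finset.sum_congr rfl this]
      simp

lemma Df_mono (a : Fin r → ℕ) {d d' : Fin r → ℕ} (h : ∀ j, d j ≤ d' j) :
    Df a d ≤ Df a d' :=
  Finset.sum_le_sum fun j _ => Nat.div_le_div_right (h j)

lemma Df_of_large (a : Fin r → ℕ) (ha : ∀ j, 1 ≤ a j) (s : Fin r) (hs : ∀ j, a j ≤ a s)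
    (m : ℕ) (d : Fin r → ℕ)
    (h : (m - 1) * a s + (∑ j, (a j - 1)) + 1 ≤ ∑ j, d j) : m ≤ Df a d := by
  by_contra hD
  push_neg at hD
  have h1 : ∀ j, d j ≤ (d j / a j) * a j + (a j - 1) := by
    intro j
    have h2 := Nat.mod_add_div' (d j) (a j)
    have h3 : d j % a j < a j := Nat.mod_lt _ (ha j)
    omega
  have h4 : (∑ j, d j) ≤ (∑ j, (d j / a j) * a j) + ∑ j, (a j - 1) := by
    rw [← Finset.sum_add_distrib]
    exact Finset.sum_le_sum fun j _ => h1 j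
  have h5 : (∑ j, (d j / a j) * a j) ≤ (∑ j, d j / a j) * a s := by
    rw [Finset.sum_mul]
    exact Finset.sum_le_sum fun j _ => Nat.mul_le_mul_left _ (hs j)
  have hDd : Df a d = ∑ j, d j / a j := rfl
  have h6 : (∑ j, d j / a j) * a s ≤ (m - 1) * a s :=
    Nat.mul_le_mul_right _ (by omega)
  omega

lemma pp_add (i : Fin r → Fin n) (μ ν : Fin n →₀ ℕ) :
    pp i (μ + ν) = pp i μ + pp i ν := by
  funext j; simp [pp]

lemma coeff_slice (i : Fin r → Fin n) (d : Fin r → ℕ) (p : MvPolynomial (Fin n) k)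
    (μ : Fin n →₀ ℕ) :
    coeff μ (slice i d p) = if pp i μ = d then coeff μ p else 0 := by
  rw [slice, coeff_sum]
  have h1 : ∀ μ' ∈ p.support.filter (fun μ' => pp i μ' = d),
      coeff μ (monomial μ' (coeff μ' p)) = if μ' = μ then coeff μ' p else 0 := by
    intro μ' _
    rw [coeff_monomial]
  rw [Finset.sum_congr rfl h1, Finset.sum_ite_eq' (p.support.filter fun μ' => pp i μ' = d) μ
    (fun μ' => coeff μ' p)]
  by_cases h : pp i μ = d
  · rw [if_pos h]
    by_cases h2 : coeff μ p = 0
    · rw [h2]; simp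
    · rw [if_pos (Finset.mem_filter.2 ⟨mem_support_iff.2 h2, h⟩)]
  · rw [if_neg h]
    have hnm : μ ∉ p.support.filter (fun μ' => pp i μ' = d) :=
      fun hc => h (Finset.mem_filter.1 hc).2
    rw [if_neg hnm]

lemma slice_eq_zero (i : Fin r → Fin n) (a : Fin r → ℕ) {m : ℕ} {p : MvPolynomial (Fin n) k}
    (hp : ∀ μ ∈ p.support, m ≤ Df a (pp i μ)) {d : Fin r → ℕ} (hd : Df a d < m) :
    slice i d p = 0 := by
  ext μ
  rw [coeff_slice, coeff_zero]
  by_cases h : pp i μ = d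
  · rw [if_pos h]
    by_contra hc
    have := hp μ (mem_support_iff.2 hc)
    rw [h] at this
    omega
  · rw [if_neg h]

lemma mem_Box {d e : Fin r → ℕ} : e ∈ Box d ↔ ∀ j, e j ≤ d j := by
  simp [Box, Fintype.mem_piFinset, Nat.lt_succ_iff]

lemma slice_mul (i : Fin r → Fin n) (d : Fin r → ℕ) (p q : MvPolynomial (Fin n) k) :
    slice i d (p * q) = ∑ e ∈ Box d, slice i e p * slice i (d - e) q := by
  apply MvPolynomial.ext
  intro μ
  rw [coeff_slice, coeff_sum]
  have h1 : ∀ e ∈ Box d, coeff μ (slice i e p * slice i (d - e) q)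
      = ∑ ab ∈ Finset.HasAntidiagonal.antidiagonal μ,
          if pp i ab.1 = e then
            (if pp i ab.2 = d - e then coeff ab.1 p * coeff ab.2 q else 0) else 0 := by
    intro e _
    rw [coeff_mul]
    refine Finset.sum_congr rfl fun ab _ => ?_
    rw [coeff_slice, coeff_slice]
    split_ifs <;> simp_all
  rw [Finset.sum_congr rfl h1, Finset.sum_comm]
  have h2 : ∀ ab : (Fin n →₀ ℕ) × (Fin n →₀ ℕ),
      (∑ e ∈ Box d, if pp i ab.1 = e then
        (if pp i ab.2 = d - e then coeff ab.1 p * coeff ab.2 q else 0) else 0)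
      = if pp i ab.1 ∈ Box d then
          (if pp i ab.2 = d - pp i ab.1 then coeff ab.1 p * coeff ab.2 q else 0) else 0 := by
    intro ab
    rw [Finset.sum_ite_eq (Box d) (pp i ab.1)
      (fun e => if pp i ab.2 = d - e then coeff ab.1 p * coeff ab.2 q else 0)]
  rw [Finset.sum_congr rfl fun ab _ => h2 ab]
  by_cases hμ : pp i μ = d
  · rw [if_pos hμ, coeff_mul]
    refine Finset.sum_congr rfl fun ab hab => ?_
    have hab' : ab.1 + ab.2 = μ := Finset.HasAntidiagonal.mem_antidiagonal.1 hab
    have hpp : ∀ j, pp i ab.1 j + pp i ab.2 j = d j := by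
      intro j
      have : pp i ab.1 j + pp i ab.2 j = pp i μ j := by
        rw [← hab', pp_add]; rfl
      rw [this, hμ]
    rw [if_pos (mem_Box.2 fun j => by have := hpp j; omega),
      if_pos (_root_.funext fun j => by have := hpp j; simp only [Pi.sub_apply]; omega)]
  · rw [if_neg hμ]
    refine (Finset.sum_eq_zero fun ab hab => ?_).symm
    have hab' : ab.1 + ab.2 = μ := Finset.HasAntidiagonal.mem_antidiagonal.1 hab
    split_ifs with hb he
    · exfalso
      apply hμ
      funext j
      have h3 : pp i ab.2 j = d j - pp i ab.1 j := by rw [he]; rfl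
      have h4 : pp i ab.1 j ≤ d j := mem_Box.1 hb j
      have h5 : pp i μ j = pp i ab.1 j + pp i ab.2 j := by
        rw [← hab', pp_add]; rfl
      omega
    · rfl
    · rfl

lemma primary (i : Fin r → Fin n) (a : Fin r → ℕ) (m : ℕ)
    (f g : MvPolynomial (Fin n) k)
    (hf : ∃ ζ ∈ f.support, ∀ j, ζ (i j) = 0)
    (hfg : ∀ μ ∈ (f * g).support, m ≤ Df a (pp i μ)) :
    ∀ μ ∈ g.support, m ≤ Df a (pp i μ) := by
  obtain ⟨ζ, hζ, hz⟩ := hf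
  have hppζ : pp i ζ = 0 := funext fun j => hz j
  have hf0 : slice i 0 f ≠ 0 := by
    intro h
    have hc : coeff ζ (slice i 0 f) = coeff ζ f := by
      rw [coeff_slice, if_pos hppζ]
    rw [h, coeff_zero] at hc
    exact mem_support_iff.1 hζ hc.symm
  have key : ∀ N (d : Fin r → ℕ), (∑ j, d j) = N → Df a d < m → slice i d g = 0 := by
    intro N
    induction N using Nat.strong_induction_on with
    | _ N ih =>
      intro d hdN hbad
      have hz0 : slice i d (f * g) = 0 := slice_eq_zero i a hfg hbad
      rw [slice_mul] at hz0
      have h0mem : (0 : Fin r → ℕ) ∈ Box d := mem_Box.2 fun j => Nat.zero_le _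
      have hterm : ∀ e ∈ Box d, e ≠ 0 → slice i e f * slice i (d - e) g = 0 := by
        intro e he hne
        have hex : ∃ j₀, e j₀ ≠ 0 := by
          by_contra h
          push_neg at h
          exact hne (funext fun j => h j)
        obtain ⟨j₀, hj₀⟩ := hex
        have hlt : (∑ j, (d - e) j) < N := by
          rw [← hdN]
          refine Finset.sum_lt_sum (fun j _ => ?_) ⟨j₀, Finset.mem_univ _, ?_⟩
          · simp only [Pi.sub_apply]; omega
          · have := mem_Box.1 he j₀
            simp only [Pi.sub_apply]
            omega
        have hbad' : Df a (d - e) < m :=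
          lt_of_le_of_lt (Df_mono a fun j => by simp only [Pi.sub_apply]; omega) hbad
        rw [ih _ hlt (d - e) rfl hbad', mul_zero]
      rw [Finset.sum_eq_single_of_mem 0 h0mem (fun e he hne => hterm e he hne)] at hz0
      have hd0 : d - 0 = d := by funext j; simp
      rw [hd0] at hz0
      rcases mul_eq_zero.1 hz0 with h | h
      · exact absurd h hf0
      · exact h
  intro μ hμ
  by_contra hc
  push_neg at hc
  have := key (∑ j, pp i μ j) (pp i μ) rfl hc
  have hcc : coeff μ (slice i (pp i μ) g) = coeff μ g := by
    rw [coeff_slice, if_pos rfl]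
  rw [this, coeff_zero] at hcc
  exact mem_support_iff.1 hμ hcc.symm

lemma exists_pair {p q : MvPolynomial (Fin n) k} {μ : Fin n →₀ ℕ}
    (h : μ ∈ (p * q).support) :
    ∃ α β, α ∈ p.support ∧ β ∈ q.support ∧ α + β = μ := by
  rw [mem_support_iff, coeff_mul] at h
  obtain ⟨ab, habm, hab⟩ := Finset.exists_ne_zero_of_sum_ne_zero h
  exact ⟨ab.1, ab.2, mem_support_iff.2 fun h0 => hab (by rw [h0, zero_mul]),
    mem_support_iff.2 fun h0 => hab (by rw [h0, mul_zero]),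
    Finset.HasAntidiagonal.mem_antidiagonal.1 habm⟩

lemma exists_support_decomp {ι : Type*} [DecidableEq ι] (t : Finset ι)
    (f : ι → MvPolynomial (Fin n) k) :
    ∀ μ ∈ (∏ i' ∈ t, f i').support, ∃ g : ι → (Fin n →₀ ℕ),
      (∀ i' ∈ t, g i' ∈ (f i').support) ∧ μ = ∑ i' ∈ t, g i' := by
  induction t using Finset.induction_on with
  | empty =>
    intro μ hμ
    rw [Finset.prod_empty] at hμ
    have : μ = 0 := by
      by_contra hne
      rw [mem_support_iff, MvPolynomial.coeff_one, if_neg (fun h => hne h.symm)] at hμ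
      exact hμ rfl
    exact ⟨fun _ => 0, fun i' h => absurd h (Finset.notMem_empty _), by simp [this]⟩
  | @insert b t' hb ih =>
    intro μ hμ
    rw [Finset.prod_insert hb] at hμ
    obtain ⟨α, β, hα, hβ, habm⟩ := exists_pair hμ
    obtain ⟨g, hg1, hg2⟩ := ih β hβ
    refine ⟨Function.update g b α, fun i' hi' => ?_, ?_⟩
    · rcases Finset.mem_insert.1 hi' with h | h
      · subst h; rw [Function.update_self]; exact hα
      · rw [Function.update_of_ne (fun hh : i' = b => hb (hh ▸ h))]; exact hg1 i' h
    · rw [Finset.sum_insert hb, Function.update_self]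
      rw [Finset.sum_congr rfl fun i' hi' =>
        (by rw [Function.update_of_ne (fun hh : i' = b => hb (hh ▸ hi'))] :
          Function.update g b α i' = g i'), ← hg2, habm]

lemma absorb_upper (i : Fin r → Fin n) (hi : Function.Injective i) (a : Fin r → ℕ)
    (ha : ∀ j, 1 ≤ a j) (s : Fin r) (hs : ∀ j, a j ≤ a s) (m : ℕ) :
    IsNAbsorbing ((Ideal.span (Set.range fun j => (X (i j) : MvPolynomial (Fin n) k) ^ a j)) ^ m)
      ((m - 1) * a s + (∑ j, (a j - 1)) + 1) := by
  set N := (m - 1) * a s + (∑ j, (a j - 1)) + 1 with hN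
  intro x hx
  by_cases hcase : ∃ i₀ : Fin (N + 1), ∃ ζ ∈ (x i₀).support, ∀ j, ζ (i j) = 0
  · obtain ⟨i₀, hex⟩ := hcase
    refine ⟨i₀, ?_⟩
    rw [mem_pow_iff i hi a ha]
    apply primary i a m (x i₀) _ hex
    rw [Finset.mul_prod_erase univ x (Finset.mem_univ i₀)]
    exact (mem_pow_iff i hi a ha m _).1 hx
  · push_neg at hcase
    refine ⟨0, ?_⟩
    rw [mem_pow_iff i hi a ha]
    intro μ hμ
    obtain ⟨g, hg, rfl⟩ := exists_support_decomp (univ.erase 0) x μ hμ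
    apply Df_of_large a ha s hs
    have h1 : ∀ j, pp i (∑ i' ∈ univ.erase 0, g i') j = ∑ i' ∈ univ.erase 0, (g i') (i j) := by
      intro j
      rw [pp, Finsupp.finset_sum_apply]
    have h2 : (∑ j, ∑ i' ∈ univ.erase 0, (g i') (i j))
        = ∑ i' ∈ univ.erase 0, ∑ j, (g i') (i j) := Finset.sum_comm
    have h3 : ∀ i' ∈ univ.erase 0, 1 ≤ ∑ j, (g i') (i j) := by
      intro i' hi'
      obtain ⟨j₀, hj₀⟩ := hcase i' (g i') (hg i' hi')
      calc 1 ≤ (g i') (i j₀) := by omega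
        _ ≤ ∑ j, (g i') (i j) := Finset.single_le_sum (f := fun j => (g i') (i j)) (fun j _ => Nat.zero_le _) (mem_univ j₀)
    have h4 : (univ.erase (0 : Fin (N + 1))).card = N := by
      rw [Finset.card_erase_of_mem (mem_univ _), Finset.card_univ, Fintype.card_fin]
      omega
    calc (m - 1) * a s + (∑ j, (a j - 1)) + 1 = N := hN.symm
      _ = ∑ i' ∈ univ.erase (0 : Fin (N + 1)), 1 := by rw [Finset.sum_const, h4, smul_eq_mul, mul_one]
      _ ≤ ∑ i' ∈ univ.erase 0, ∑ j, (g i') (i j) := Finset.sum_le_sum h3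
      _ = ∑ j, pp i (∑ i' ∈ univ.erase 0, g i') j := by
          rw [← h2]
          exact Finset.sum_congr rfl fun j _ => (h1 j).symm

lemma erase_last (M : ℕ) :
    (univ : Finset (Fin (M + 1))).erase (Fin.last M) =
      (univ : Finset (Fin M)).image Fin.castSucc := by
  ext u
  simp only [Finset.mem_erase, Finset.mem_univ, and_true, Finset.mem_image, true_and]
  constructor
  · intro h
    obtain ⟨y, hy⟩ := Fin.exists_castSucc_eq.2 h
    exact ⟨y, hy⟩
  · rintro ⟨y, rfl⟩
    exact ne_of_lt (Fin.castSucc_lt_last y)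

lemma erase_castSucc (M : ℕ) (t₀ : Fin M) :
    (univ : Finset (Fin (M + 1))).erase (Fin.castSucc t₀) =
      insert (Fin.last M) (((univ : Finset (Fin M)).erase t₀).image Fin.castSucc) := by
  ext u
  simp only [Finset.mem_erase, Finset.mem_univ, and_true, Finset.mem_insert, Finset.mem_image,
    true_and]
  constructor
  · intro h
    by_cases hu : u = Fin.last M
    · exact Or.inl hu
    · obtain ⟨y, hy⟩ := Fin.exists_castSucc_eq.2 hu
      refine Or.inr ⟨y, fun hyy => h ?_, hy⟩
      rw [← hy, hyy]
  · rintro (rfl | ⟨y, hy, rfl⟩)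
    · exact (ne_of_lt (Fin.castSucc_lt_last t₀)).symm
    · intro hc
      exact hy (Fin.castSucc_injective _ hc)

lemma prod_erase_last {β : Type*} [CommMonoid β] {M : ℕ} (g : Fin (M + 1) → β) :
    (∏ u ∈ univ.erase (Fin.last M), g u) = ∏ t : Fin M, g t.castSucc := by
  rw [erase_last, Finset.prod_image (fun x _ y _ h => Fin.castSucc_injective _ h)]

lemma prod_erase_castSucc {β : Type*} [CommMonoid β] {M : ℕ} (g : Fin (M + 1) → β) (t₀ : Fin M) :
    (∏ u ∈ univ.erase (Fin.castSucc t₀), g u)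
      = (∏ t ∈ univ.erase t₀, g t.castSucc) * g (Fin.last M) := by
  rw [erase_castSucc, Finset.prod_insert (by
      simp only [Finset.mem_image, Finset.mem_erase]
      rintro ⟨y, _, hy⟩
      exact (ne_of_lt (Fin.castSucc_lt_last y)) hy),
    Finset.prod_image (fun x _ y _ h => Fin.castSucc_injective _ h), mul_comm]

lemma absorb_succ {R : Type*} [CommRing R] {I : Ideal R} {N : ℕ}
    (h : IsNAbsorbing I N) : IsNAbsorbing I (N + 1) := by
  intro x hx
  set A : Fin (N + 2) := Fin.castSucc (Fin.last N) with hA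
  set B : Fin (N + 2) := Fin.last (N + 1) with hB
  set y : Fin (N + 1) → R :=
    Fin.snoc (fun t : Fin N => x (Fin.castSucc (Fin.castSucc t))) (x A * x B) with hy
  have hyc : ∀ t : Fin N, y (Fin.castSucc t) = x (Fin.castSucc (Fin.castSucc t)) := by
    intro t; rw [hy, Fin.snoc_castSucc]
  have hyl : y (Fin.last N) = x A * x B := by rw [hy, Fin.snoc_last]
  have hprod : (∏ t, y t) = ∏ t, x t := by
    rw [Fin.prod_univ_castSucc (f := y), Fin.prod_univ_castSucc (f := x),
      Fin.prod_univ_castSucc (f := fun t : Fin (N + 1) => x (Fin.castSucc t)), hyl]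
    rw [Finset.prod_congr rfl fun t _ => hyc t]
    ring
  obtain ⟨j, hj⟩ := h y (by rw [hprod]; exact hx)
  by_cases hjl : j = Fin.last N
  · subst hjl
    rw [prod_erase_last, Finset.prod_congr rfl fun t _ => hyc t] at hj
    refine ⟨A, ?_⟩
    rw [prod_erase_castSucc (g := x) (t₀ := Fin.last N), prod_erase_last]
    exact Ideal.mul_mem_right _ _ hj
  · obtain ⟨t₀, rfl⟩ := Fin.exists_castSucc_eq.2 hjl
    rw [prod_erase_castSucc, hyl,
      Finset.prod_congr rfl fun t _ => hyc t] at hj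
    refine ⟨Fin.castSucc (Fin.castSucc t₀), ?_⟩
    rw [prod_erase_castSucc (g := x),
      prod_erase_castSucc (g := fun u : Fin (N + 1) => x (Fin.castSucc u))]
    rw [mul_assoc]
    exact hj

lemma absorb_le {R : Type*} [CommRing R] {I : Ideal R} {N N' : ℕ}
    (hle : N ≤ N') (h : IsNAbsorbing I N) : IsNAbsorbing I N' := by
  induction N' , hle using Nat.le_induction with
  | base => exact h
  | succ N' _ ih => exact absorb_succ ih

lemma cw_sum (a : Fin r → ℕ) (s : Fin r) (m : ℕ) :
    (∑ j, cw a s m j) = (∑ j, (a j - 1)) + (m - 1) * a s := by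
  simp only [cw]
  rw [Finset.sum_add_distrib]
  congr 1
  simp

lemma prod_monomial_one {ι : Type*} (t : Finset ι) (τ : ι → (Fin n →₀ ℕ)) :
    (∏ j ∈ t, monomial (τ j) (1 : k)) = monomial (∑ j ∈ t, τ j) 1 := by
  classical
  induction t using Finset.induction_on with
  | empty => simp
  | @insert b t' hb ih =>
    rw [Finset.prod_insert hb, Finset.sum_insert hb, ih, monomial_mul, one_mul]

lemma coeff_F (i : Fin r → Fin n) (hi : Function.Injective i) (u : Fin r) :
    coeff (Finsupp.single (i u) 1) (∑ j, (X (i j) : MvPolynomial (Fin n) k)) = 1 := by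
  classical
  rw [coeff_sum]
  have h1 : ∀ j ∈ univ, coeff (Finsupp.single (i u) 1) (X (i j) : MvPolynomial (Fin n) k)
      = if j = u then 1 else 0 := by
    intro j _
    rw [coeff_X']
    congr 1
    simp only [eq_iff_iff]
    constructor
    · intro h
      have := Finsupp.single_left_injective (one_ne_zero (α := ℕ)) h
      exact hi this
    · intro h; rw [h]
  rw [Finset.sum_congr rfl h1]
  simp

lemma supp_F (i : Fin r → Fin n) (μ : Fin n →₀ ℕ)
    (hμ : μ ∈ (∑ j, (X (i j) : MvPolynomial (Fin n) k)).support) :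
    ∃ u, μ = Finsupp.single (i u) 1 := by
  classical
  rw [mem_support_iff, coeff_sum] at hμ
  obtain ⟨u, _, hu⟩ := Finset.exists_ne_zero_of_sum_ne_zero hμ
  rw [coeff_X'] at hu
  by_cases h : Finsupp.single (i u) 1 = μ
  · exact ⟨u, h.symm⟩
  · rw [if_neg h] at hu; exact absurd rfl hu

lemma Df_cw (a : Fin r → ℕ) (ha : ∀ j, 1 ≤ a j) (s : Fin r) (m : ℕ) (hm : 1 ≤ m) :
    Df a (cw a s m) = m - 1 := by
  rw [Df, Finset.sum_eq_single s]
  · simp only [cw, eq_self_iff_true, if_true]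
    rw [Nat.add_mul_div_right _ _ (ha s), Nat.div_eq_of_lt (by have := ha s; omega)]
    omega
  · intro j _ hj
    simp only [cw]
    rw [if_neg hj, add_zero]
    exact Nat.div_eq_of_lt (by have := ha j; omega)
  · simp

lemma Df_cw_succ (a : Fin r → ℕ) (ha : ∀ j, 1 ≤ a j) (s : Fin r) (m : ℕ) (hm : 1 ≤ m)
    (u : Fin r) :
    Df a (fun j => cw a s m j + if u = j then 1 else 0) = m := by
  rw [Df]
  have key : ∀ j, (cw a s m j + if u = j then 1 else 0) / a j
      = (if j = s then m - 1 else 0) + (if j = u then 1 else 0) := by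
    intro j
    simp only [cw]
    by_cases hjs : j = s <;> by_cases hju : j = u
    · subst hjs; subst hju
      simp only [eq_self_iff_true, if_true]
      have h1 : a j - 1 + (m - 1) * a j + 1 = a j + (m - 1) * a j := by
        have := ha j; omega
      rw [h1, Nat.add_mul_div_right _ _ (ha j), Nat.div_self (ha j)]
      omega
    · subst hjs
      have hju' : ¬ u = j := fun h => hju h.symm
      simp only [eq_self_iff_true, if_true, if_neg hju, if_neg hju', add_zero]
      rw [Nat.add_mul_div_right _ _ (ha j), Nat.div_eq_of_lt (by have := ha j; omega)]
      omega
    · subst hju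
      simp only [eq_self_iff_true, if_true, if_neg hjs, add_zero]
      have h2 : a j - 1 + 1 = a j := by have := ha j; omega
      rw [h2, Nat.div_self (ha j)]
    · have hju' : ¬ u = j := fun h => hju h.symm
      simp only [if_neg hjs, if_neg hju, if_neg hju', add_zero]
      rw [Nat.div_eq_of_lt (by have := ha j; omega)]
  rw [Finset.sum_congr rfl fun j _ => key j, Finset.sum_add_distrib]
  have e1 : (∑ j, if j = s then (m - 1) else 0) = m - 1 := by simp
  have e2 : (∑ j : Fin r, if j = u then 1 else 0) = 1 := by simp
  rw [e1, e2]
  omega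

lemma not_absorb (i : Fin r → Fin n) (hi : Function.Injective i) (a : Fin r → ℕ)
    (ha : ∀ j, 1 ≤ a j) (s : Fin r) (hs : ∀ j, a j ≤ a s) (m : ℕ) (hm : 1 ≤ m) :
    ¬ IsNAbsorbing
      ((Ideal.span (Set.range fun j => (X (i j) : MvPolynomial (Fin n) k) ^ a j)) ^ m)
      (∑ j, cw a s m j) := by
  classical
  intro habs
  set c : Fin r → ℕ := cw a s m with hc
  set T : ℕ := ∑ j, c j with hT
  set b : Fin n →₀ ℕ := ∑ j, Finsupp.single (i j) (c j) with hb
  set F : MvPolynomial (Fin n) k := ∑ j, X (i j) with hF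
  set M : MvPolynomial (Fin n) k := monomial b (1 : k) with hM
  have hbapp : ∀ j', b (i j') = c j' := fun j' => apply_sum_single i hi c j'
  have hppb : pp i b = c := funext fun j => hbapp j
  have hF0 : F ≠ 0 := by
    intro h0
    have h1 := coeff_F (k := k) i hi s
    rw [← hF, h0, coeff_zero] at h1
    exact (one_ne_zero : (1:k) ≠ 0) h1.symm
  have hcard : Fintype.card (Σ j : Fin r, Fin (c j)) = T := by
    rw [Fintype.card_sigma]
    simp [hT]
  let e : (Σ j : Fin r, Fin (c j)) ≃ Fin T := Fintype.equivFinOfCardEq hcard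
  set x : Fin (T + 1) → MvPolynomial (Fin n) k :=
    Fin.cons F (fun t => X (i (e.symm t).1)) with hx
  -- full product
  have hxprod : (∏ t, x t) = F * M := by
    rw [hx, Fin.prod_cons]
    congr 1
    have h1 : (∏ t : Fin T, (X (i (e.symm t).1) : MvPolynomial (Fin n) k))
        = ∏ p : Σ j : Fin r, Fin (c j), (X (i p.1) : MvPolynomial (Fin n) k) := by
      refine (Fintype.prod_equiv e (fun p => (X (i p.1) : MvPolynomial (Fin n) k))
        (fun t => (X (i (e.symm t).1) : MvPolynomial (Fin n) k)) fun p => ?_).symm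
      simp only [Equiv.symm_apply_apply]
    rw [h1, ← Finset.univ_sigma_univ, Finset.prod_sigma]
    have h2 : ∀ j : Fin r, (∏ _v : Fin (c j), (X (i j) : MvPolynomial (Fin n) k))
        = monomial (Finsupp.single (i j) (c j)) 1 := by
      intro j
      rw [Finset.prod_const, Finset.card_univ, Fintype.card_fin, X_pow_eq_monomial]
    rw [Finset.prod_congr rfl fun j _ => h2 j, prod_monomial_one]
  -- the full product is in Q^m
  have hmem : (∏ t, x t) ∈
      (Ideal.span (Set.range fun j => (X (i j) : MvPolynomial (Fin n) k) ^ a j)) ^ m := by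
    rw [hxprod, mem_pow_iff i hi a ha]
    intro μ hμ
    obtain ⟨α, β, hα, hβ, hab⟩ := exists_pair hμ
    obtain ⟨u, rfl⟩ := supp_F i α hα
    have hβb : β = b := by
      have := hβ
      rw [hM, support_monomial, if_neg (one_ne_zero (α := k))] at this
      simpa using this
    have hab' : Finsupp.single (i u) 1 + b = μ := by rw [← hβb]; exact hab
    have hppμ : pp i μ = fun j => c j + if u = j then 1 else 0 := by
      funext j
      rw [pp, ← hab']
      rw [Finsupp.add_apply, hbapp j, Finsupp.single_apply]
      have h4 : (i u = i j) = (u = j) := by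
        simp only [eq_iff_iff]
        exact ⟨fun h => hi h, fun h => by rw [h]⟩
      simp only [h4]
      omega
    rw [hppμ, Df_cw_succ a ha s m hm u]
  obtain ⟨j₀, hj₀⟩ := habs x hmem
  revert hj₀
  refine Fin.cases ?_ ?_ j₀
  · -- dropping the factor F
    intro hj
    have hfact : x 0 * (∏ t ∈ univ.erase 0, x t) = F * M := by
      rw [Finset.mul_prod_erase univ x (Finset.mem_univ 0), hxprod]
    rw [hx] at hfact
    rw [Fin.cons_zero] at hfact
    rw [← hx] at hfact
    have hsub : (∏ t ∈ univ.erase 0, x t) = M := mul_left_cancel₀ hF0 hfact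
    rw [hsub, mem_pow_iff i hi a ha] at hj
    have hbm : b ∈ M.support := by
      rw [hM, support_monomial, if_neg (one_ne_zero (α := k))]
      simp
    have := hj b hbm
    rw [hppb, Df_cw a ha s m hm] at this
    omega
  · -- dropping a variable factor
    intro t hj
    set u : Fin r := (e.symm t).1 with hu
    have hcu : 0 < c u := (e.symm t).2.pos
    set b' : Fin n →₀ ℕ := ∑ j, Finsupp.single (i j) (c j - if j = u then 1 else 0) with hb'
    have hb'app : ∀ j', b' (i j') = c j' - (if j' = u then 1 else 0) :=
      fun j' => apply_sum_single i hi _ j'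
    have hbb' : b = b' + Finsupp.single (i u) 1 := by
      apply Finsupp.ext
      intro l
      rw [Finsupp.add_apply]
      by_cases hl : ∃ j', i j' = l
      · obtain ⟨j', rfl⟩ := hl
        rw [hbapp j', hb'app j', Finsupp.single_apply]
        have h4 : (i u = i j') = (j' = u) := by
          simp only [eq_iff_iff]
          exact ⟨fun h => (hi h).symm, fun h => by rw [h]⟩
        simp only [h4]
        by_cases h : j' = u
        · subst h
          rw [if_pos (rfl : u = u)]
          omega
        · rw [if_neg h]
          omega
      · push_neg at hl
        rw [hb, hb', apply_sum_single_notin i _ l hl, apply_sum_single_notin i _ l hl,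
          Finsupp.single_apply, if_neg (hl u)]
        simp
    have hXu : (X (i u) : MvPolynomial (Fin n) k) ≠ 0 := X_ne_zero _
    have hfact : x t.succ * (∏ t' ∈ univ.erase t.succ, x t') = F * M := by
      rw [Finset.mul_prod_erase univ x (Finset.mem_univ _), hxprod]
    have hxt : x t.succ = X (i u) := by rw [hx, Fin.cons_succ, hu]
    have hmon : monomial b' (1 : k) * X (i u) = M := by
      rw [← pow_one (X (i u) : MvPolynomial (Fin n) k), X_pow_eq_monomial, monomial_mul,
        one_mul, ← hbb', hM]
    have hsub : (∏ t' ∈ univ.erase t.succ, x t') = monomial b' 1 * F := by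
      apply mul_left_cancel₀ hXu
      rw [← hxt, hfact, hxt, ← hmon]
      ring
    -- b is in the support of the subproduct
    have hcoeff : coeff b (monomial b' (1 : k) * F) = 1 := by
      rw [hF, Finset.mul_sum, coeff_sum]
      have h6 : ∀ j ∈ univ, coeff b (monomial b' (1 : k) * X (i j))
          = if j = u then 1 else 0 := by
        intro j _
        rw [← pow_one (X (i j) : MvPolynomial (Fin n) k), X_pow_eq_monomial, monomial_mul,
          one_mul, coeff_monomial]
        congr 1
        simp only [eq_iff_iff]
        constructor
        · intro h
          rw [hbb'] at h
          have h7 := add_left_cancel h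
          have h8 := Finsupp.single_left_injective (one_ne_zero (α := ℕ)) h7
          exact hi h8
        · intro h
          rw [h, ← hbb']
      rw [Finset.sum_congr rfl h6]
      simp
    have hbs : b ∈ (monomial b' (1 : k) * F).support := by
      rw [mem_support_iff, hcoeff]
      exact one_ne_zero
    rw [hsub, mem_pow_iff i hi a ha] at hj
    have := hj b hbs
    rw [hppb, Df_cw a ha s m hm] at this
    omega

lemma omega_pow (i : Fin r → Fin n) (hi : Function.Injective i) (a : Fin r → ℕ)
    (ha : ∀ j, 1 ≤ a j) (s : Fin r) (hs : ∀ j, a j ≤ a s) (m : ℕ) (hm : 1 ≤ m) :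
    omegaAbs ((Ideal.span (Set.range fun j => (X (i j) : MvPolynomial (Fin n) k) ^ a j)) ^ m)
      = (m - 1) * a s + (∑ j, (a j - 1)) + 1 := by
  set I := (Ideal.span (Set.range fun j => (X (i j) : MvPolynomial (Fin n) k) ^ a j)) ^ m with hI
  have hup : IsNAbsorbing I ((m - 1) * a s + (∑ j, (a j - 1)) + 1) :=
    absorb_upper i hi a ha s hs m
  have hT : (m - 1) * a s + (∑ j, (a j - 1)) + 1 = (∑ j, cw a s m j) + 1 := by
    rw [cw_sum]; omega
  have hmem : ((∑ j, cw a s m j) + 1) ∈ {N | IsNAbsorbing I N} := by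
    rw [← hT]; exact hup
  have hlow : ∀ N ∈ {N | IsNAbsorbing I N}, (∑ j, cw a s m j) + 1 ≤ N := by
    intro N hN
    by_contra hlt
    push_neg at hlt
    exact not_absorb i hi a ha s hs m hm (absorb_le (by omega) hN)
  rw [omegaAbs]
  refine le_antisymm (le_trans (Nat.sInf_le hmem) (by omega)) ?_
  rw [hT]
  exact le_csInf ⟨_, hmem⟩ hlow

end OmegaAux

open OmegaAux in
theorem omega_pow_irreducible_monomial {k : Type*} [Field k] (n r : ℕ)
    (i : Fin r → Fin n) (hi : Function.Injective i) (a : Fin r → ℕ) (ha : ∀ j, 1 ≤ a j)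
    (s : Fin r) (hs : ∀ j, a j ≤ a s)
    (Q : Ideal (MvPolynomial (Fin n) k))
    (hQ : Q = Ideal.span (Set.range fun j => (X (i j) : MvPolynomial (Fin n) k) ^ a j)) :
    omegaAbs Q = ∑ j, a j - r + 1 ∧
      ∀ m : ℕ, 1 ≤ m → omegaAbs (Q ^ m) = (m - 1) * a s + omegaAbs Q := by
  subst hQ
  have h1 : omegaAbs (Ideal.span (Set.range fun j =>
      (X (i j) : MvPolynomial (Fin n) k) ^ a j)) = (∑ j, (a j - 1)) + 1 := by
    have := omega_pow (k := k) i hi a ha s hs 1 le_rfl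
    rw [pow_one] at this
    rw [this]
    omega
  have hsum : (∑ j, (a j - 1)) + r = ∑ j, a j := by
    have h2 : ∀ j : Fin r, (a j - 1) + 1 = a j := fun j => by have := ha j; omega
    calc (∑ j, (a j - 1)) + r = (∑ j, (a j - 1)) + ∑ _j : Fin r, 1 := by
          rw [Finset.sum_const, Finset.card_univ, Fintype.card_fin, smul_eq_mul, mul_one]
      _ = ∑ j, ((a j - 1) + 1) := Finset.sum_add_distrib.symm
      _ = ∑ j, a j := Finset.sum_congr rfl fun j _ => h2 j
  constructor
  · rw [h1]; omega
  · intro m hm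
    rw [omega_pow (k := k) i hi a ha s hs m hm, h1]
    omega
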